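/- There exists N such that for all n ≥ N and all real p with 3·log(n)/n ≤ p ≤ 1, the sum ∑_{i=1}^{n−1} C(n−1, i−1)·(1−p)^{i(n−i)} is at most 1.5/n. -/

import Mathlib

lemma my_choose_le_pow_min (n i : ℕ) (hi1 : 1 ≤ i) (hi2 : i ≤ n - 1) :
    (n - 1).choose (i - 1) ≤ n ^ (min (i - 1) (n - i)) := by
  rcases le_total (i - 1) (n - i) with h | h
  · rw [min_eq_left h]
    calc (n - 1).choose (i - 1) ≤ (n - 1) ^ (i - 1) := Nat.choose_le_pow _ _
      _ ≤ n ^ (i - 1) := Nat.pow_le_pow_left (Nat.sub_le _ _) _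
  · rw [min_eq_right h]
    have hsymm : (n - 1).choose (i - 1) = (n - 1).choose (n - i) := by
      have h1 : i - 1 ≤ n - 1 := by omega
      have h2 : (n - 1) - (i - 1) = n - i := by omega
      rw [← Nat.choose_symm h1, h2]
    rw [hsymm]
    calc (n - 1).choose (n - i) ≤ (n - 1) ^ (n - i) := Nat.choose_le_pow _ _
      _ ≤ n ^ (n - i) := Nat.pow_le_pow_left (Nat.sub_le _ _) _

lemma my_key_poly (n i : ℕ) (hn : 400 ≤ n) (hi1 : 1 ≤ i) (hi2 : i ≤ n - 1) :
    ((min (i - 1) (n - i) : ℕ) : ℝ) - 3 * i * ((n : ℝ) - i) / n ≤ 3 / n - 2 := by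
  have hnR : (400:ℝ) ≤ n := by exact_mod_cast hn
  have hn0 : (0:ℝ) < n := by linarith
  have hne : (n:ℝ) ≠ 0 := ne_of_gt hn0
  rw [← mul_le_mul_iff_of_pos_right hn0]
  have e1 : (((min (i - 1) (n - i) : ℕ) : ℝ) - 3 * i * ((n : ℝ) - i) / n) * n
      = ((min (i - 1) (n - i) : ℕ) : ℝ) * n - 3 * i * ((n : ℝ) - i) := by
    field_simp
  have e2 : ((3:ℝ) / n - 2) * n = 3 - 2 * n := by field_simp
  rw [e1, e2]
  rcases le_total (i - 1) (n - i) with h | h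
  · rw [min_eq_left h]
    have hiR : (1:ℝ) ≤ i := by exact_mod_cast hi1
    have hcast : ((i - 1 : ℕ) : ℝ) = (i:ℝ) - 1 := by
      push_cast [hi1]; ring
    have hc : 2 * (i:ℝ) ≤ (n:ℝ) + 1 := by
      have : 2 * i ≤ n + 1 := by omega
      exact_mod_cast this
    rw [hcast]
    nlinarith [mul_nonneg (by linarith : (0:ℝ) ≤ (i:ℝ) - 1)
      (by linarith : (0:ℝ) ≤ (n:ℝ) + 1 - 2 * i)]
  · rw [min_eq_right h]
    have hin : i ≤ n := by omega
    have hcast : ((n - i : ℕ) : ℝ) = (n:ℝ) - i := by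
      push_cast [hin]; ring
    have hj1 : (1:ℝ) ≤ (n:ℝ) - i := by
      have h' : (i:ℝ) + 1 ≤ n := by exact_mod_cast (by omega : i + 1 ≤ n)
      linarith
    have hc : 2 * ((n:ℝ) - i) ≤ (n:ℝ) - 1 := by
      have h' : 2 * (n - i) + 1 ≤ n := by omega
      have h'' : 2 * ((n:ℝ) - (i:ℝ)) + 1 ≤ n := by
        have := (by exact_mod_cast h' : 2 * ((n - i : ℕ):ℝ) + 1 ≤ (n:ℝ))
        rwa [hcast] at this
      linarith
    rw [hcast]
    nlinarith [mul_nonneg (by linarith : (0:ℝ) ≤ (n:ℝ) - i - 1)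
      (by linarith : (0:ℝ) ≤ 2 * (n:ℝ) - 3 - 3 * ((n:ℝ) - i))]

theorem sum_t_le :
    ∃ N : ℕ, ∀ n : ℕ, N ≤ n → ∀ p : ℝ, 3 * Real.log n / n ≤ p → p ≤ 1 →
      ∑ i ∈ Finset.Icc 1 (n - 1), ((n - 1).choose (i - 1) : ℝ) * (1 - p) ^ (i * (n - i)) ≤
        1.5 / n := by
  refine ⟨400, fun n hn p hp1 hp2 => ?_⟩
  have hnR : (400:ℝ) ≤ n := by exact_mod_cast hn
  have hn0 : (0:ℝ) < n := by linarith
  have hlog0 : 0 ≤ Real.log n := Real.log_nonneg (by linarith)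
  have hlogn : Real.log n ≤ (n:ℝ) / 9 := by
    have hs : Real.log n = 2 * Real.log (Real.sqrt n) := by
      rw [Real.log_sqrt (le_of_lt hn0)]; ring
    have h1 : Real.log (Real.sqrt n) ≤ Real.sqrt n - 1 :=
      Real.log_le_sub_one_of_pos (Real.sqrt_pos.mpr hn0)
    have h2 : Real.sqrt n ≤ (n:ℝ) / 18 := by
      have h3 : Real.sqrt n ≤ Real.sqrt (((n:ℝ) / 18) ^ 2) := by
        apply Real.sqrt_le_sqrt; nlinarith
      rwa [Real.sqrt_sq (by linarith : (0:ℝ) ≤ (n:ℝ)/18)] at h3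
    linarith
  have hq : 3 * Real.log n / n ≤ 1 / 3 := by
    rw [div_le_iff₀ hn0]; linarith
  have hexp13 : Real.exp (3 * Real.log n / n) ≤ 3 / 2 := by
    have h1 : Real.exp (3 * Real.log n / n) ≤ Real.exp (1/3) := Real.exp_le_exp.mpr hq
    have h2 : (2:ℝ)/3 ≤ Real.exp (-(1/3)) := by
      have := Real.add_one_le_exp (-(1/3) : ℝ); linarith
    have h3 : Real.exp (1/3) * Real.exp (-(1/3)) = 1 := by
      rw [← Real.exp_add]; norm_num
    nlinarith [Real.exp_pos ((1:ℝ)/3)]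
  have hp0 : 0 ≤ p := le_trans (by positivity) hp1
  have hterm : ∀ i ∈ Finset.Icc 1 (n - 1),
      ((n - 1).choose (i - 1) : ℝ) * (1 - p) ^ (i * (n - i)) ≤ (3/2) / (n:ℝ)^2 := by
    intro i hi
    rw [Finset.mem_Icc] at hi
    obtain ⟨hi1, hi2⟩ := hi
    have hin : i ≤ n := by omega
    set m := min (i - 1) (n - i) with hm
    set k := i * (n - i) with hk
    have hc1 : ((n - 1).choose (i - 1) : ℝ) ≤ (n:ℝ) ^ m := by
      exact_mod_cast my_choose_le_pow_min n i hi1 hi2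
    have hpow : (1 - p) ^ k ≤ Real.exp ((k:ℝ) * -(3 * Real.log n / n)) := by
      calc (1 - p) ^ k ≤ Real.exp (-p) ^ k := by
            apply pow_le_pow_left₀ (by linarith)
            have := Real.add_one_le_exp (-p); linarith
        _ = Real.exp ((k:ℝ) * (-p)) := (Real.exp_nat_mul _ _).symm
        _ ≤ Real.exp ((k:ℝ) * -(3 * Real.log n / n)) := by
            apply Real.exp_le_exp.mpr
            apply mul_le_mul_of_nonneg_left (by linarith) (by positivity)
    have hnpow : (n:ℝ) ^ m = Real.exp ((m:ℝ) * Real.log n) := by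
      rw [Real.exp_nat_mul, Real.exp_log hn0]
    have hcomb : ((n - 1).choose (i - 1) : ℝ) * (1 - p) ^ k ≤
        Real.exp ((m:ℝ) * Real.log n + (k:ℝ) * -(3 * Real.log n / n)) := by
      rw [Real.exp_add, ← hnpow]
      exact mul_le_mul hc1 hpow (pow_nonneg (by linarith) _) (by positivity)
    have hkcast : ((k : ℕ) : ℝ) = (i:ℝ) * ((n:ℝ) - i) := by
      rw [hk]; push_cast [hin]; ring
    have hexpineq : (m:ℝ) * Real.log n + (k:ℝ) * -(3 * Real.log n / n) ≤
        (3 / n - 2) * Real.log n := by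
      have hkey := my_key_poly n i hn hi1 hi2
      calc (m:ℝ) * Real.log n + (k:ℝ) * -(3 * Real.log n / n)
          = ((m:ℝ) - 3 * i * ((n:ℝ) - i) / n) * Real.log n := by
            rw [hkcast]; ring
        _ ≤ (3 / n - 2) * Real.log n := mul_le_mul_of_nonneg_right hkey hlog0
    have hfinal : Real.exp ((3 / (n:ℝ) - 2) * Real.log n) =
        Real.exp (3 * Real.log n / n) / (n:ℝ)^2 := by
      rw [show ((3:ℝ) / n - 2) * Real.log n = 3 * Real.log n / n - 2 * Real.log n by ring,
        Real.exp_sub]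
      congr 1
      rw [show (2:ℝ) * Real.log n = ((2:ℕ):ℝ) * Real.log n by norm_num,
        Real.exp_nat_mul, Real.exp_log hn0]
    calc ((n - 1).choose (i - 1) : ℝ) * (1 - p) ^ k
        ≤ Real.exp ((m:ℝ) * Real.log n + (k:ℝ) * -(3 * Real.log n / n)) := hcomb
      _ ≤ Real.exp ((3 / n - 2) * Real.log n) := Real.exp_le_exp.mpr hexpineq
      _ = Real.exp (3 * Real.log n / n) / (n:ℝ)^2 := hfinal
      _ ≤ (3/2) / (n:ℝ)^2 := div_le_div_of_nonneg_right hexp13 (by positivity) |>.trans_eq rfl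
  calc ∑ i ∈ Finset.Icc 1 (n - 1), ((n - 1).choose (i - 1) : ℝ) * (1 - p) ^ (i * (n - i))
      ≤ (Finset.Icc 1 (n - 1)).card • ((3/2) / (n:ℝ)^2) :=
        Finset.sum_le_card_nsmul _ _ _ hterm
    _ = ((n - 1 : ℕ) : ℝ) * ((3/2) / (n:ℝ)^2) := by
        rw [Nat.card_Icc, nsmul_eq_mul]; norm_num
    _ ≤ 1.5 / n := by
        have h1 : ((n - 1 : ℕ) : ℝ) ≤ (n:ℝ) := by
          exact_mod_cast Nat.sub_le n 1
        calc ((n - 1 : ℕ) : ℝ) * ((3/2) / (n:ℝ)^2) ≤ (n:ℝ) * ((3/2) / (n:ℝ)^2) :=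
            mul_le_mul_of_nonneg_right h1 (by positivity)
          _ = 1.5 / n := by field_simp; ring
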